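/- Let G=(V,E) be a locally finite graph with symmetric positive edge weights, μ(x) ≥ μ_min > 0, h satisfying (H1) and (H2), and f satisfying (F1), (F2), (F3) with f(x,s)=0 for s ≤ 0. Then there exist positive constants δ and r such that J(u) ≥ δ for all u ∈ ℋ with ‖u‖_ℋ = r, where J(u) = (1/2)‖u‖_ℋ² − ∫_V F(x,u)dμ. -/

import Mathlib

open Filter Topology

namespace GraphNLE

variable {V : Type*}

/-- Integral of `g` over `V` w.r.t. the measure `μ`: `∫_V g dμ = Σ_x μ(x) g(x)`. -/
noncomputable def intV (μ g : V → ℝ) : ℝ := ∑' x, μ x * g x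

/-- The graph (μ-)Laplacian: `Δu(x) = (1/μ(x)) Σ_{y} w_{xy} (u(y)-u(x))`. -/
noncomputable def lap (w : V → V → ℝ) (μ u : V → ℝ) (x : V) : ℝ :=
  (1 / μ x) * ∑' y, w x y * (u y - u x)

/-- Squared length of the gradient: `|∇u|²(x) = (1/(2μ(x))) Σ_y w_{xy} (u(y)-u(x))²`. -/
noncomputable def gradSq (w : V → V → ℝ) (μ u : V → ℝ) (x : V) : ℝ :=
  (1 / (2 * μ x)) * ∑' y, w x y * (u y - u x) ^ 2

/-- The gradient form `Γ(u,v)(x) = (1/(2μ(x))) Σ_y w_{xy} (u(y)-u(x))(v(y)-v(x))`. -/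
noncomputable def gamma (w : V → V → ℝ) (μ u v : V → ℝ) (x : V) : ℝ :=
  (1 / (2 * μ x)) * ∑' y, w x y * (u y - u x) * (v y - v x)

/-- Membership in `W^{1,2}(V)`: finite `∫(|∇u|² + u²) dμ`. -/
def memW (w : V → V → ℝ) (μ u : V → ℝ) : Prop :=
  Summable (fun x => μ x * gradSq w μ u x) ∧ Summable (fun x => μ x * u x ^ 2)

/-- The `W^{1,2}` norm `(∫_V (|∇u|² + u²) dμ)^{1/2}`. -/
noncomputable def normW (w : V → V → ℝ) (μ u : V → ℝ) : ℝ :=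
  Real.sqrt (intV μ fun x => gradSq w μ u x + u x ^ 2)

/-- Membership in the space `ℋ`: finite `∫(|∇u|² + h u²) dμ`. -/
def memH (w : V → V → ℝ) (μ h u : V → ℝ) : Prop :=
  Summable (fun x => μ x * gradSq w μ u x) ∧ Summable (fun x => μ x * (h x * u x ^ 2))

/-- The norm of `ℋ`: `‖u‖_ℋ = (∫_V (|∇u|² + h u²) dμ)^{1/2}`. -/
noncomputable def normH (w : V → V → ℝ) (μ h u : V → ℝ) : ℝ :=
  Real.sqrt (intV μ fun x => gradSq w μ u x + h x * u x ^ 2)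

/-- The inner product of `ℋ`: `⟨u,v⟩_ℋ = ∫_V (Γ(u,v) + h u v) dμ`. -/
noncomputable def innerH (w : V → V → ℝ) (μ h u v : V → ℝ) : ℝ :=
  intV μ fun x => gamma w μ u v x + h x * u x * v x

/-- `λ₁ = inf { ∫(|∇u|² + h u²) dμ : u ∈ ℋ, ∫ u² dμ = 1 }`. -/
noncomputable def lambda1 (w : V → V → ℝ) (μ h : V → ℝ) : ℝ :=
  sInf {t : ℝ | ∃ u : V → ℝ, memH w μ h u ∧ intV μ (fun x => u x ^ 2) = 1 ∧
    intV μ (fun x => gradSq w μ u x + h x * u x ^ 2) = t}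

/-- The primitive `F(x,s) = ∫_0^s f(x,t) dt`. -/
noncomputable def Fint (f : V → ℝ → ℝ) (x : V) (s : ℝ) : ℝ := ∫ t in (0:ℝ)..s, f x t

/-- The functional `J(u) = (1/2)∫(|∇u|² + h u²) dμ − ∫ F(x,u) dμ`. -/
noncomputable def energy (w : V → V → ℝ) (μ h : V → ℝ) (f : V → ℝ → ℝ) (u : V → ℝ) : ℝ :=
  (1 / 2) * intV μ (fun x => gradSq w μ u x + h x * u x ^ 2) -
    intV μ (fun x => Fint f x (u x))

/-- The perturbed functional `J_ε(u) = J(u) − ε ∫ g u dμ`. -/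
noncomputable def energyP (w : V → V → ℝ) (μ h : V → ℝ) (f : V → ℝ → ℝ) (g : V → ℝ)
    (ε : ℝ) (u : V → ℝ) : ℝ :=
  energy w μ h f u - ε * intV μ (fun x => g x * u x)

/-- Weak convergence `u_k ⇀ u` in the Hilbert space `ℋ`. -/
def weakConvH (w : V → V → ℝ) (μ h : V → ℝ) (uk : ℕ → V → ℝ) (u : V → ℝ) : Prop :=
  ∀ v : V → ℝ, memH w μ h v →
    Tendsto (fun k => innerH w μ h (uk k) v) atTop (nhds (innerH w μ h u v))

/-- The `L^q(V,μ)` norm for finite `q`. -/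
noncomputable def LqNorm (μ : V → ℝ) (q : ℝ) (u : V → ℝ) : ℝ :=
  (intV μ fun x => |u x| ^ q) ^ (1 / q)

/-- The `L^∞(V)` norm `sup_x |u(x)|`. -/
noncomputable def LinfNorm (u : V → ℝ) : ℝ := ⨆ x, |u x|

/-- `g` (viewed via the pairing `u ↦ ∫ g u dμ`) belongs to the dual `ℋ'` of `ℋ`. -/
def memHdual (w : V → V → ℝ) (μ h g : V → ℝ) : Prop :=
  ∃ C : ℝ, ∀ u : V → ℝ, memH w μ h u →
    Summable (fun x => μ x * (g x * u x)) ∧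
    |intV μ fun x => g x * u x| ≤ C * normH w μ h u

/-- `u ∈ ℋ` is a weak solution of `−Δu + hu = f(x,u)`. -/
def weakSol (w : V → V → ℝ) (μ h : V → ℝ) (f : V → ℝ → ℝ) (u : V → ℝ) : Prop :=
  memH w μ h u ∧ ∀ φ : V → ℝ, memH w μ h φ →
    intV μ (fun x => gamma w μ u φ x + h x * u x * φ x) =
      intV μ (fun x => f x (u x) * φ x)

/-- `u ∈ ℋ` is a weak solution of the perturbed equation `−Δu + hu = f(x,u) + εg`. -/
def weakSolP (w : V → V → ℝ) (μ h : V → ℝ) (f : V → ℝ → ℝ) (g : V → ℝ) (ε : ℝ)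
    (u : V → ℝ) : Prop :=
  memH w μ h u ∧ ∀ φ : V → ℝ, memH w μ h φ →
    intV μ (fun x => gamma w μ u φ x + h x * u x * φ x) =
      intV μ (fun x => f x (u x) * φ x) + ε * intV μ (fun x => g x * φ x)

/-- The simple graph underlying the weights `w` (edges where the weight is nonzero). -/
def adjGraph (w : V → V → ℝ) : SimpleGraph V where
  Adj x y := x ≠ y ∧ (w x y ≠ 0 ∨ w y x ≠ 0)
  symm := ⟨fun x y hxy => ⟨hxy.1.symm, hxy.2.symm⟩⟩
  loopless := ⟨fun x hx => hx.1 rfl⟩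



/-! ### Auxiliary lemmas -/

lemma Fint_nonpos (f : V → ℝ → ℝ) (hfneg : ∀ x, ∀ s : ℝ, s ≤ 0 → f x s = 0)
    (x : V) (s : ℝ) (hs : s ≤ 0) : Fint f x s = 0 := by
  unfold Fint
  rw [intervalIntegral.integral_congr (g := fun _ => (0:ℝ))]
  · simp
  · intro t ht
    rw [Set.uIcc_of_ge hs] at ht
    exact hfneg x t ht.2

lemma gradSq_nonneg' (w : V → V → ℝ) (hwnn : ∀ x y, 0 ≤ w x y) (μ : V → ℝ)
    (hμ : ∀ x, 0 ≤ μ x) (u : V → ℝ) (x : V) : 0 ≤ gradSq w μ u x := by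
  unfold gradSq
  apply mul_nonneg
  · rw [one_div]
    apply inv_nonneg.2
    linarith [hμ x]
  · exact tsum_nonneg fun y => mul_nonneg (hwnn x y) (sq_nonneg _)

lemma gradSq_smul' (w : V → V → ℝ) (μ u : V → ℝ) (a : ℝ) (x : V) :
    gradSq w μ (fun y => a * u y) x = a ^ 2 * gradSq w μ u x := by
  unfold gradSq
  have h1 : ∀ y, w x y * (a * u y - a * u x) ^ 2 = a ^ 2 * (w x y * (u y - u x) ^ 2) :=
    fun y => by ring
  rw [tsum_congr h1, tsum_mul_left]
  ring

lemma summable_sq' (μ h : V → ℝ) (hμ : ∀ x, 0 ≤ μ x) (h₀ : ℝ) (hh₀ : 0 < h₀)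
    (hH1 : ∀ x, h₀ ≤ h x) (u : V → ℝ)
    (hs : Summable fun x => μ x * (h x * u x ^ 2)) :
    Summable fun x => μ x * u x ^ 2 := by
  refine Summable.of_nonneg_of_le (fun x => mul_nonneg (hμ x) (sq_nonneg _))
    ?_ (hs.mul_left (1 / h₀))
  · intro x
    have h1 : h₀ * (μ x * u x ^ 2) ≤ μ x * (h x * u x ^ 2) := by
      nlinarith [mul_nonneg (mul_nonneg (sub_nonneg.2 (hH1 x)) (hμ x)) (sq_nonneg (u x))]
    calc μ x * u x ^ 2 = (1 / h₀) * (h₀ * (μ x * u x ^ 2)) := by field_simp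
      _ ≤ (1 / h₀) * (μ x * (h x * u x ^ 2)) :=
        mul_le_mul_of_nonneg_left h1 (by positivity)

lemma poincare' (w : V → V → ℝ) (hwnn : ∀ x y, 0 ≤ w x y)
    (μ : V → ℝ) (hμ : ∀ x, 0 ≤ μ x)
    (h : V → ℝ) (h₀ : ℝ) (hh₀ : 0 < h₀) (hH1 : ∀ x, h₀ ≤ h x)
    (u : V → ℝ) (hu : memH w μ h u) :
    lambda1 w μ h * intV μ (fun x => u x ^ 2)
      ≤ intV μ (fun x => gradSq w μ u x + h x * u x ^ 2) := by
  have hnn : ∀ (v : V → ℝ) (x : V), 0 ≤ μ x * (gradSq w μ v x + h x * v x ^ 2) := by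
    intro v x
    exact mul_nonneg (hμ x) (add_nonneg (gradSq_nonneg' w hwnn μ hμ v x)
      (mul_nonneg (le_trans hh₀.le (hH1 x)) (sq_nonneg _)))
  have hQ0 : 0 ≤ intV μ (fun x => gradSq w μ u x + h x * u x ^ 2) :=
    tsum_nonneg (hnn u)
  have ht0 : 0 ≤ intV μ (fun x => u x ^ 2) :=
    tsum_nonneg (fun x => mul_nonneg (hμ x) (sq_nonneg _))
  rcases ht0.eq_or_lt with h0 | hpos
  · rw [← h0, mul_zero]
    exact hQ0
  · set t := intV μ (fun x => u x ^ 2) with htdef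
    set Q := intV μ (fun x => gradSq w μ u x + h x * u x ^ 2) with hQdef
    have hst : 0 < Real.sqrt t := Real.sqrt_pos.2 hpos
    set a := (Real.sqrt t)⁻¹ with ha
    have ha2 : a ^ 2 = t⁻¹ := by
      rw [ha, inv_pow, Real.sq_sqrt hpos.le]
    set v := fun y => a * u y with hv
    have hgv : ∀ x, gradSq w μ v x = a ^ 2 * gradSq w μ u x := gradSq_smul' w μ u a
    have hmemv : memH w μ h v :=
      ⟨(hu.1.mul_left (a ^ 2)).congr (fun x => by rw [hgv x]; ring),
       (hu.2.mul_left (a ^ 2)).congr (fun x => by simp only [hv]; ring)⟩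
    have hnorm1 : intV μ (fun x => v x ^ 2) = 1 := by
      have h1 : ∀ x, μ x * v x ^ 2 = a ^ 2 * (μ x * u x ^ 2) := fun x => by
        simp only [hv]; ring
      show (∑' x, μ x * v x ^ 2) = 1
      rw [tsum_congr h1, tsum_mul_left, ha2]
      exact inv_mul_cancel₀ hpos.ne'
    have hQv : intV μ (fun x => gradSq w μ v x + h x * v x ^ 2) = a ^ 2 * Q := by
      have h1 : ∀ x, μ x * (gradSq w μ v x + h x * v x ^ 2)
          = a ^ 2 * (μ x * (gradSq w μ u x + h x * u x ^ 2)) := fun x => by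
        rw [hgv x]; simp only [hv]; ring
      show (∑' x, μ x * (gradSq w μ v x + h x * v x ^ 2)) = a ^ 2 * Q
      rw [tsum_congr h1, tsum_mul_left]
      rfl
    have hbdd : BddBelow {s : ℝ | ∃ u : V → ℝ, memH w μ h u ∧
        intV μ (fun x => u x ^ 2) = 1 ∧
        intV μ (fun x => gradSq w μ u x + h x * u x ^ 2) = s} := by
      refine ⟨0, fun s hs => ?_⟩
      obtain ⟨u', _, _, hs⟩ := hs
      rw [← hs]
      exact tsum_nonneg (hnn u')
    have hle : lambda1 w μ h ≤ a ^ 2 * Q :=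
      csInf_le hbdd ⟨v, hmemv, hnorm1, hQv⟩
    calc lambda1 w μ h * t ≤ (a ^ 2 * Q) * t :=
          mul_le_mul_of_nonneg_right hle hpos.le
      _ = Q := by rw [ha2]; field_simp

theorem mountain_pass_geometry
    (w : V → V → ℝ) (hsymm : ∀ x y, w x y = w y x) (hwnn : ∀ x y, 0 ≤ w x y)
    (hlf : ∀ x : V, {y | w x y ≠ 0}.Finite)
    (μ : V → ℝ) (μmin : ℝ) (hμmin : 0 < μmin) (hμ : ∀ x, μmin ≤ μ x)
    (h : V → ℝ) (h₀ : ℝ) (hh₀ : 0 < h₀) (hH1 : ∀ x, h₀ ≤ h x)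
    (hH2 : Summable fun x => μ x * (1 / h x))
    (f : V → ℝ → ℝ)
    (hF1c : ∀ x, Continuous (f x)) (hF10 : ∀ x, f x 0 = 0)
    (hF1b : ∀ M : ℝ, 0 < M → ∃ A : ℝ, ∀ x, ∀ s ∈ Set.Icc (0:ℝ) M, f x s ≤ A)
    (hF2 : ∃ θ : ℝ, 2 < θ ∧ ∀ x, ∀ s : ℝ, 0 < s →
      0 < θ * Fint f x s ∧ θ * Fint f x s ≤ s * f x s)
    (hF3 : ∃ c : ℝ, c < lambda1 w μ h ∧ ∃ ρ : ℝ, 0 < ρ ∧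
      ∀ x, ∀ s : ℝ, 0 < s → s < ρ → 2 * Fint f x s ≤ c * s ^ 2)
    (hfneg : ∀ x, ∀ s : ℝ, s ≤ 0 → f x s = 0) :
    ∃ δ : ℝ, 0 < δ ∧ ∃ r : ℝ, 0 < r ∧
      ∀ u : V → ℝ, memH w μ h u → normH w μ h u = r → δ ≤ energy w μ h f u := by
  obtain ⟨c, hcl, ρ, hρ, hFρ⟩ := hF3
  obtain ⟨θ, hθ, hθF⟩ := hF2
  have μnn : ∀ x, 0 ≤ μ x := fun x => le_trans hμmin.le (hμ x)
  have hFpos : ∀ x (s : ℝ), 0 < s → 0 < Fint f x s := by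
    intro x s hs
    have h1 := (hθF x s hs).1
    rcases mul_pos_iff.mp h1 with ⟨_, hF⟩ | ⟨hθneg, _⟩
    · exact hF
    · linarith
  cases isEmpty_or_nonempty V with
  | inl hV =>
    refine ⟨1, one_pos, 1, one_pos, fun u hu hnorm => ?_⟩
    exfalso
    have h0 : normH w μ h u = 0 := by
      unfold normH intV
      rw [tsum_empty, Real.sqrt_zero]
    rw [hnorm] at h0
    norm_num at h0
  | inr hV =>
    obtain ⟨x0⟩ := hV
    have hc : 0 < c := by
      have h1 := hFpos x0 (ρ / 2) (by linarith)
      have h2 := hFρ x0 (ρ / 2) (by linarith) (by linarith)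
      nlinarith
    set lam := lambda1 w μ h with hlam
    have hlampos : 0 < lam := lt_trans hc hcl
    set r := Real.sqrt (μmin * h₀) * ρ / 2 with hrdef
    have hr2 : r ^ 2 = μmin * h₀ * ρ ^ 2 / 4 := by
      rw [hrdef, div_pow, mul_pow, Real.sq_sqrt (by positivity : (0:ℝ) ≤ μmin * h₀)]
      ring
    have hrpos : 0 < r := by
      have hs := Real.sqrt_pos.mpr (mul_pos hμmin hh₀)
      rw [hrdef]
      positivity
    have hδpos : 0 < r ^ 2 / 2 * (1 - c / lam) := by
      have : c / lam < 1 := (div_lt_one hlampos).2 hcl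
      have h2 : 0 < r ^ 2 / 2 := by positivity
      nlinarith
    refine ⟨r ^ 2 / 2 * (1 - c / lam), hδpos, r, hrpos, fun u hu hnorm => ?_⟩
    set Q := intV μ (fun x => gradSq w μ u x + h x * u x ^ 2) with hQdef
    have hnn : ∀ x, 0 ≤ μ x * (gradSq w μ u x + h x * u x ^ 2) := by
      intro x
      exact mul_nonneg (μnn x) (add_nonneg (gradSq_nonneg' w hwnn μ μnn u x)
        (mul_nonneg (le_trans hh₀.le (hH1 x)) (sq_nonneg _)))
    have hQ0 : 0 ≤ Q := tsum_nonneg hnn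
    have hQr : Q = r ^ 2 := by
      rw [← hnorm]
      exact (Real.sq_sqrt hQ0).symm
    have sQ : Summable (fun x => μ x * (gradSq w μ u x + h x * u x ^ 2)) :=
      (hu.1.add hu.2).congr (fun x => by ring)
    have hsu2 : Summable (fun x => μ x * u x ^ 2) :=
      summable_sq' μ h μnn h₀ hh₀ hH1 u hu.2
    set t := intV μ (fun x => u x ^ 2) with htdef
    have ht0 : 0 ≤ t := tsum_nonneg (fun x => mul_nonneg (μnn x) (sq_nonneg _))
    -- pointwise bound on u
    have hu2 : ∀ x, u x ^ 2 ≤ ρ ^ 2 / 4 := by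
      intro x
      have h1 : μ x * (h x * u x ^ 2) ≤ Q := by
        have h2 : μ x * (gradSq w μ u x + h x * u x ^ 2) ≤ Q :=
          Summable.le_tsum sQ x (fun y _ => hnn y)
        have h3 : 0 ≤ μ x * gradSq w μ u x :=
          mul_nonneg (μnn x) (gradSq_nonneg' w hwnn μ μnn u x)
        nlinarith
      have h4 : μmin * (h₀ * u x ^ 2) ≤ μ x * (h x * u x ^ 2) :=
        mul_le_mul (hμ x) (mul_le_mul_of_nonneg_right (hH1 x) (sq_nonneg _))
          (mul_nonneg hh₀.le (sq_nonneg _)) (μnn x)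
      rw [hQr, hr2] at h1
      nlinarith [mul_pos hμmin hh₀]
    have hFb : ∀ x, 0 ≤ Fint f x (u x) ∧ Fint f x (u x) ≤ c / 2 * u x ^ 2 := by
      intro x
      rcases le_or_gt (u x) 0 with hx | hx
      · rw [Fint_nonpos f hfneg x (u x) hx]
        exact ⟨le_refl _, mul_nonneg (by linarith) (sq_nonneg _)⟩
      · have hup : u x < ρ := by nlinarith [hu2 x]
        have := hFρ x (u x) hx hup
        exact ⟨(hFpos x _ hx).le, by linarith⟩
    have hsF : Summable (fun x => μ x * Fint f x (u x)) := by
      refine Summable.of_nonneg_of_le (fun x => mul_nonneg (μnn x) (hFb x).1)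
        ?_ (hsu2.mul_left (c / 2))
      intro x
      have h1 := mul_le_mul_of_nonneg_left (hFb x).2 (μnn x)
      nlinarith
    have hIF : intV μ (fun x => Fint f x (u x)) ≤ c / 2 * t := by
      show (∑' x, μ x * Fint f x (u x)) ≤ c / 2 * t
      calc (∑' x, μ x * Fint f x (u x)) ≤ ∑' x, c / 2 * (μ x * u x ^ 2) := by
            apply Summable.tsum_le_tsum _ hsF (hsu2.mul_left _)
            intro x
            have h1 := mul_le_mul_of_nonneg_left (hFb x).2 (μnn x)
            nlinarith
        _ = c / 2 * t := tsum_mul_left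
    have hpo : lam * t ≤ Q := poincare' w hwnn μ μnn h h₀ hh₀ hH1 u hu
    have h1 : t ≤ r ^ 2 / lam := by
      rw [le_div_iff₀ hlampos]
      rw [hQr] at hpo
      linarith
    have h2 : c / 2 * t ≤ c / 2 * (r ^ 2 / lam) :=
      mul_le_mul_of_nonneg_left h1 (by linarith)
    have h3 : r ^ 2 / 2 * (1 - c / lam) = 1 / 2 * r ^ 2 - c / 2 * (r ^ 2 / lam) := by
      ring
    show r ^ 2 / 2 * (1 - c / lam) ≤
      1 / 2 * intV μ (fun x => gradSq w μ u x + h x * u x ^ 2) -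
        intV μ (fun x => Fint f x (u x))
    rw [← hQdef, hQr]
    linarith


end GraphNLE
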